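/- Let s ∈ (0,1) and let K(x,y) be a kernel with |K(x,y)| ≤ Λ|y|^{-n-2s} satisfying ∫_{B_{2r} \ B_r} |K(x,y) - K(x',y)| dy ≤ ω(|x-x'|) r^{-2s} for all r > 0, with ω a modulus of continuity. Let u be bounded on ℝ^n, C² on B_r(x₀), and x ∈ B_{r/2}(x₀). Then for any x' ∈ ℝ^n, |∫ (2u(x) - u(x+y) - u(x-y))(K(x',y) - K(x,y)) dy| ≤ C (‖u‖_{C²(B_{3r/4}(x₀))} + ‖u‖_{L∞(ℝ^n)}) ω(|x - x'|), with C depending only on n, s, r. -/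

import Mathlib

open MeasureTheory

abbrev Euc (n : ℕ) : Type := EuclideanSpace ℝ (Fin n)

lemma secdiff {n : ℕ} {u : Euc n → ℝ} {x₀ : Euc n} {r A : ℝ} (hr : 0 < r) (hA0 : 0 ≤ A)
    (hu : ContDiffOn ℝ 2 u (Metric.ball x₀ r))
    (hA : ∀ k ≤ 2, ∀ z ∈ Metric.ball x₀ (3 * r / 4),
      ‖iteratedFDerivWithin ℝ k u (Metric.ball x₀ r) z‖ ≤ A)
    {x : Euc n} (hx : x ∈ Metric.ball x₀ (r / 2)) {y : Euc n} (hy : ‖y‖ ≤ r / 4) :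
    |2 * u x - u (x + y) - u (x - y)| ≤ 2 * A * ‖y‖ ^ 2 := by
  set B := Metric.ball x₀ r with hB
  set B' := Metric.ball x₀ (3 * r / 4) with hB'
  have hB'B : B' ⊆ B := Metric.ball_subset_ball (by linarith)
  have hBopen : IsOpen B := Metric.isOpen_ball
  have hUD : UniqueDiffOn ℝ B := hBopen.uniqueDiffOn
  have hxx₀ : ‖x - x₀‖ < r / 2 := by simpa [dist_eq_norm] using hx
  have hmem : ∀ c : ℝ, |c| ≤ 1 → x + c • y ∈ B' := by
    intro c hc
    have : ‖x + c • y - x₀‖ < 3 * r / 4 := by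
      have h1 : ‖x + c • y - x₀‖ ≤ ‖x - x₀‖ + ‖c • y‖ := by
        have : x + c • y - x₀ = (x - x₀) + c • y := by abel
        rw [this]; exact norm_add_le _ _
      have h2 : ‖c • y‖ ≤ r / 4 := by
        rw [norm_smul]
        calc ‖c‖ * ‖y‖ ≤ 1 * (r/4) := by
              apply mul_le_mul hc (by exact hy) (norm_nonneg _) zero_le_one
          _ = r / 4 := by ring
      linarith
    simpa [hB', dist_eq_norm] using this
  have hdiff : DifferentiableOn ℝ u B := hu.differentiableOn (by norm_num)
  have hdAt : ∀ z ∈ B, DifferentiableAt ℝ u z := fun z hz =>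
    (hdiff z hz).differentiableAt (hBopen.mem_nhds hz)
  have hgeq : ∀ z ∈ B, fderiv ℝ u z = fderivWithin ℝ u B z := fun z hz =>
    (fderivWithin_of_isOpen hBopen hz).symm
  have hg1 : ContDiffOn ℝ 1 (fderivWithin ℝ u B) B := hu.fderivWithin hUD (by norm_num)
  have hgdiff : DifferentiableOn ℝ (fderiv ℝ u) B :=
    (hg1.differentiableOn (by norm_num)).congr hgeq
  have hbound : ∀ z ∈ B', ‖fderivWithin ℝ (fderiv ℝ u) B' z‖ ≤ A := by
    intro z hz
    have hzB := hB'B hz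
    have e1 : fderivWithin ℝ (fderiv ℝ u) B' z
        = fderivWithin ℝ (fderivWithin ℝ u B) B z := by
      rw [fderivWithin_of_isOpen Metric.isOpen_ball hz]
      have he : fderiv ℝ u =ᶠ[nhds z] fderivWithin ℝ u B :=
        Filter.eventually_of_mem (hBopen.mem_nhds hzB) hgeq
      rw [he.fderiv_eq, fderivWithin_of_isOpen hBopen hzB]
    rw [e1]
    refine ContinuousLinearMap.opNorm_le_bound _ hA0 fun v => ?_
    refine ContinuousLinearMap.opNorm_le_bound _ (by positivity) fun w => ?_
    have happ : fderivWithin ℝ (fderivWithin ℝ u B) B z v w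
        = iteratedFDerivWithin ℝ 2 u B z ![v, w] := by
      rw [iteratedFDerivWithin_two_apply u hUD hzB]
      simp
    rw [show ‖fderivWithin ℝ (fderivWithin ℝ u B) B z v w‖
        = ‖iteratedFDerivWithin ℝ 2 u B z ![v, w]‖ by rw [happ]]
    calc ‖iteratedFDerivWithin ℝ 2 u B z ![v, w]‖
        ≤ ‖iteratedFDerivWithin ℝ 2 u B z‖ * (‖v‖ * ‖w‖) := by
          have := (iteratedFDerivWithin ℝ 2 u B z).le_opNorm ![v, w]
          simpa [Fin.prod_univ_two] using this
      _ ≤ A * (‖v‖ * ‖w‖) := by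
          apply mul_le_mul_of_nonneg_right (hA 2 le_rfl z hz) (by positivity)
      _ = A * ‖v‖ * ‖w‖ := by ring
  have hlip : ∀ a ∈ B', ∀ b ∈ B', ‖fderiv ℝ u b - fderiv ℝ u a‖ ≤ A * ‖b - a‖ := by
    intro a ha b hb
    exact Convex.norm_image_sub_le_of_norm_fderivWithin_le
      (hgdiff.mono hB'B) hbound (convex_ball x₀ _) ha hb
  set φ : ℝ → ℝ := fun t => u (x + t • y) + u (x - t • y) with hφdef
  set φ' : ℝ → ℝ := fun t => (fderiv ℝ u (x + t • y)) y - (fderiv ℝ u (x - t • y)) y with hφ'def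
  have hmem' : ∀ t ∈ Set.Icc (0:ℝ) 1, x + t • y ∈ B' ∧ x - t • y ∈ B' := by
    intro t ht
    constructor
    · exact hmem t (by rw [abs_of_nonneg ht.1]; exact ht.2)
    · have := hmem (-t) (by rw [abs_neg, abs_of_nonneg ht.1]; exact ht.2)
      simpa [sub_eq_add_neg, neg_smul] using this
  have hφ : ∀ t ∈ Set.Icc (0:ℝ) 1, HasDerivAt φ (φ' t) t := by
    intro t ht
    have h1 : HasDerivAt (fun t : ℝ => x + t • y) y t := by
      simpa using ((hasDerivAt_id t).smul_const y).const_add x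
    have h2 : HasDerivAt (fun t : ℝ => x - t • y) (-y) t := by
      simpa using ((hasDerivAt_id t).smul_const y).const_sub x
    have d1 := ((hdAt _ (hB'B (hmem' t ht).1)).hasFDerivAt).comp_hasDerivAt t h1
    have d2 := ((hdAt _ (hB'B (hmem' t ht).2)).hasFDerivAt).comp_hasDerivAt t h2
    have := d1.add d2
    have e : φ' t = (fderiv ℝ u (x + t • y)) y + (fderiv ℝ u (x - t • y)) (-y) := by
      simp [hφ'def, sub_eq_add_neg]
    rw [e]; exact this
  have hφ'b : ∀ t ∈ Set.Icc (0:ℝ) 1, ‖φ' t‖ ≤ 2 * A * ‖y‖ ^ 2 := by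
    intro t ht
    obtain ⟨hp, hm⟩ := hmem' t ht
    have hl := hlip _ hm _ hp
    have hd : (x + t • y) - (x - t • y) = (2 * t) • y := by
      rw [two_mul, add_smul]; abel
    have hnd : ‖(x + t • y) - (x - t • y)‖ ≤ 2 * ‖y‖ := by
      rw [hd, norm_smul]
      have h2t : ‖(2 * t : ℝ)‖ ≤ 2 := by
        rw [Real.norm_eq_abs, abs_of_nonneg (by linarith [ht.1])]; linarith [ht.2]
      exact mul_le_mul_of_nonneg_right h2t (norm_nonneg y)
    calc ‖φ' t‖ = ‖(fderiv ℝ u (x + t • y) - fderiv ℝ u (x - t • y)) y‖ := by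
          simp [hφ'def, ContinuousLinearMap.sub_apply]
      _ ≤ ‖fderiv ℝ u (x + t • y) - fderiv ℝ u (x - t • y)‖ * ‖y‖ :=
          ContinuousLinearMap.le_opNorm _ _
      _ ≤ (A * ‖(x + t • y) - (x - t • y)‖) * ‖y‖ :=
          mul_le_mul_of_nonneg_right hl (norm_nonneg _)
      _ ≤ (A * (2 * ‖y‖)) * ‖y‖ := by
          apply mul_le_mul_of_nonneg_right _ (norm_nonneg _)
          exact mul_le_mul_of_nonneg_left hnd hA0
      _ = 2 * A * ‖y‖ ^ 2 := by ring
  have key := Convex.norm_image_sub_le_of_norm_hasDerivWithin_le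
    (fun t ht => (hφ t ht).hasDerivWithinAt) hφ'b (convex_Icc 0 1)
    (Set.mem_Icc.mpr ⟨le_refl 0, zero_le_one⟩) (Set.mem_Icc.mpr ⟨zero_le_one, le_refl 1⟩)
  have hφ0 : φ 0 = 2 * u x := by simp [hφdef]; ring
  have hφ1 : φ 1 = u (x + y) + u (x - y) := by simp [hφdef]
  have : ‖φ 1 - φ 0‖ ≤ 2 * A * ‖y‖ ^ 2 := by simpa using key
  rw [hφ1, hφ0] at this
  rw [show 2 * u x - u (x + y) - u (x - y) = -((u (x+y) + u (x-y)) - 2 * u x) by ring, abs_neg]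
  simpa [Real.norm_eq_abs] using this

lemma rpow_pow_comm {a : ℝ} (ha : 0 ≤ a) (m : ℕ) (y : ℝ) : (a ^ m) ^ y = (a ^ y) ^ m := by
  rw [← Real.rpow_natCast a m, ← Real.rpow_mul ha, mul_comm, Real.rpow_mul ha, Real.rpow_natCast]

lemma half_pow_rpow (m : ℕ) (s : ℝ) :
    (((1:ℝ)/2) ^ m) ^ (-(2*s)) = ((2:ℝ) ^ (2*s)) ^ m := by
  rw [rpow_pow_comm (by norm_num) m (-(2*s))]
  congr 1
  rw [one_div, Real.inv_rpow (by norm_num), Real.rpow_neg (by norm_num), inv_inv]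


set_option maxHeartbeats 1000000 in
/-- For a kernel `K(x,y)` bounded by `Λ|y|^{-n-2s}` satisfying the integral
continuity condition with modulus `ω`, if `u` is bounded and `C²` on `B_r(x₀)`
(with all norms bounded by `A`) and `x ∈ B_{r/2}(x₀)`, then
`|∫ (2u(x)-u(x+y)-u(x-y))(K(x',y)-K(x,y)) dy| ≤ C A ω(|x-x'|)`
with `C = C(n,s,r)`. -/
theorem stmt10 (n : ℕ) (hn : 0 < n) (s : ℝ) (hs : 0 < s) (hs1 : s < 1)
    (r : ℝ) (hr : 0 < r) :
    ∃ C > 0, ∀ (Lam : ℝ) (K : Euc n → Euc n → ℝ), Measurable (Function.uncurry K) →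
      (∀ x : Euc n, ∀ y : Euc n, y ≠ 0 → |K x y| ≤ Lam * ‖y‖ ^ (-((n : ℝ) + 2 * s))) →
      ∀ ω : ℝ → ℝ, (∀ t, 0 ≤ t → 0 ≤ ω t) → Monotone ω →
      (∀ x x' : Euc n, ∀ ρ : ℝ, 0 < ρ →
        (∫ y in Metric.ball (0 : Euc n) (2 * ρ) \ Metric.ball 0 ρ, |K x y - K x' y|)
          ≤ ω ‖x - x'‖ * ρ ^ (-(2 * s))) →
      ∀ (u : Euc n → ℝ) (x₀ : Euc n) (A : ℝ), Continuous u → (∀ z, |u z| ≤ A) →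
      ContDiffOn ℝ 2 u (Metric.ball x₀ r) →
      (∀ k ≤ 2, ∀ z ∈ Metric.ball x₀ (3 * r / 4),
        ‖iteratedFDerivWithin ℝ k u (Metric.ball x₀ r) z‖ ≤ A) →
      ∀ x ∈ Metric.ball x₀ (r / 2), ∀ x' : Euc n,
        |∫ y, (2 * u x - u (x + y) - u (x - y)) * (K x' y - K x y)|
          ≤ C * A * ω ‖x - x'‖ := by
  haveI : Nonempty (Fin n) := Fin.pos_iff_nonempty.mp hn
  set R := r / 4 with hRdef
  have hR : 0 < R := by positivity
  set b : ℝ := (2:ℝ) ^ (2*s) with hbdef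
  have hb0 : 0 < b := Real.rpow_pos_of_pos (by norm_num) _
  have hb4 : b < 4 := by
    have h1 : (2:ℝ) ^ (2*s) < (2:ℝ) ^ (2:ℝ) :=
      Real.rpow_lt_rpow_of_exponent_lt one_lt_two (by linarith)
    have h2 : (2:ℝ) ^ (2:ℝ) = 4 := by
      rw [show (2:ℝ) = ((2:ℕ):ℝ) by norm_num, Real.rpow_natCast]; norm_num
    rw [hbdef]
    calc (2:ℝ) ^ (2*s) < (2:ℝ) ^ (2:ℝ) := h1
      _ = 4 := h2
  set q₁ : ℝ := b / 4 with hq₁def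
  have hq₁0 : 0 ≤ q₁ := by positivity
  have hq₁1 : q₁ < 1 := by rw [hq₁def]; linarith
  set q₂ : ℝ := (2:ℝ) ^ (-(2*s)) with hq₂def
  have hq₂0 : 0 ≤ q₂ := (Real.rpow_pos_of_pos (by norm_num) _).le
  have hq₂1 : q₂ < 1 :=
    Real.rpow_lt_one_of_one_lt_of_neg one_lt_two (by linarith)
  have hRs : 0 < R ^ (-(2*s)) := Real.rpow_pos_of_pos hR _
  set c₁ : ℝ := 2 * R^2 * R ^ (-(2*s)) * b with hc₁def
  set c₂ : ℝ := 4 * R ^ (-(2*s)) with hc₂def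
  have hc₁ : 0 < c₁ := by rw [hc₁def]; positivity
  have hc₂ : 0 < c₂ := by rw [hc₂def]; positivity
  refine ⟨c₁ * (1-q₁)⁻¹ + c₂ * (1-q₂)⁻¹, by
    have h1 : 0 < 1 - q₁ := by linarith
    have h2 : 0 < 1 - q₂ := by linarith
    positivity, ?_⟩
  intro Lam K hKm hKb ω hω0 hωm hcont u x₀ A hucont hbdd hC2 hA x hx x'
  have hA0 : 0 ≤ A := le_trans (abs_nonneg (u x₀)) (hbdd x₀)
  set W := ω ‖x - x'‖ with hWdef
  have hW0 : 0 ≤ W := hω0 _ (norm_nonneg _)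
  set f : Euc n → ℝ := fun y => (2 * u x - u (x + y) - u (x - y)) * (K x' y - K x y) with hfdef
  by_cases hInt : Integrable f volume
  swap
  · rw [integral_undef hInt, abs_zero]
    have h1 : 0 < 1 - q₁ := by linarith
    have h2 : 0 < 1 - q₂ := by linarith
    positivity
  -- measurability of the kernel difference
  have hKx' : Measurable fun y => K x' y := hKm.comp (measurable_const.prodMk measurable_id)
  have hKx : Measurable fun y => K x y := hKm.comp (measurable_const.prodMk measurable_id)
  have hΔm : Measurable fun y => |K x' y - K x y| := (hKx'.sub hKx).abs
  have hLam0 : 0 ≤ Lam := by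
    set y₀ : Euc n := EuclideanSpace.single (Classical.arbitrary (Fin n)) (1:ℝ) with hy₀def
    have hy₀n : ‖y₀‖ = 1 := by rw [hy₀def, EuclideanSpace.norm_single]; norm_num
    have hy₀ : y₀ ≠ 0 := by
      intro h; rw [h] at hy₀n; simp at hy₀n
    have h := hKb x y₀ hy₀
    rw [hy₀n, Real.one_rpow, mul_one] at h
    exact le_trans (abs_nonneg _) h
  -- integrability of the kernel difference on annuli
  have hann : ∀ ρ : ℝ, 0 < ρ → IntegrableOn (fun y => |K x' y - K x y|)
      (Metric.ball (0:Euc n) (2*ρ) \ Metric.ball 0 ρ) volume := by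
    intro ρ hρ
    have hmeas : MeasurableSet (Metric.ball (0:Euc n) (2*ρ) \ Metric.ball 0 ρ) :=
      measurableSet_ball.diff measurableSet_ball
    apply Measure.integrableOn_of_bounded (M := 2 * Lam * ρ ^ (-((n:ℝ) + 2*s)))
    · exact ((measure_mono Set.diff_subset).trans_lt measure_ball_lt_top).ne
    · exact hΔm.aestronglyMeasurable
    · filter_upwards [ae_restrict_mem hmeas] with y hy
      have hyρ : ρ ≤ ‖y‖ := by
        have := hy.2
        simpa [mem_ball_zero_iff, not_lt] using this
      have hy0 : y ≠ 0 := by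
        intro h; rw [h, norm_zero] at hyρ; linarith
      have h1 := hKb x' y hy0
      have h2 := hKb x y hy0
      have hcn : 0 ≤ (n:ℝ) := Nat.cast_nonneg n
      have hr1 : ‖y‖ ^ (-((n:ℝ)+2*s)) ≤ ρ ^ (-((n:ℝ)+2*s)) :=
        Real.rpow_le_rpow_of_nonpos hρ hyρ (by linarith)
      have hml := mul_le_mul_of_nonneg_left hr1 hLam0
      calc ‖|K x' y - K x y|‖ = |K x' y - K x y| := by rw [Real.norm_eq_abs, abs_abs]
        _ ≤ |K x' y| + |K x y| := abs_sub _ _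
        _ ≤ Lam * ‖y‖ ^ (-((n:ℝ)+2*s)) + Lam * ‖y‖ ^ (-((n:ℝ)+2*s)) := add_le_add h1 h2
        _ ≤ 2 * Lam * ρ ^ (-((n:ℝ)+2*s)) := by linarith
  -- the annulus integral bound from the hypothesis
  have hannI : ∀ ρ : ℝ, 0 < ρ →
      (∫ y in Metric.ball (0:Euc n) (2*ρ) \ Metric.ball 0 ρ, |K x' y - K x y|)
        ≤ W * ρ ^ (-(2*s)) := by
    intro ρ hρ
    have := hcont x' x ρ hρ
    rwa [norm_sub_rev] at this
  -- trivial bound on the second difference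
  have htriv : ∀ y : Euc n, |2 * u x - u (x + y) - u (x - y)| ≤ 4 * A := by
    intro y
    have h1 := hbdd x; have h2 := hbdd (x + y); have h3 := hbdd (x - y)
    calc |2 * u x - u (x + y) - u (x - y)|
        ≤ |2 * u x - u (x + y)| + |u (x - y)| := abs_sub _ _
      _ ≤ (|2 * u x| + |u (x + y)|) + |u (x - y)| := by
          have := abs_sub (2 * u x) (u (x + y)); linarith
      _ ≤ (2 * A + A) + A := by
          have h4 : |2 * u x| = 2 * |u x| := by rw [abs_mul, abs_two]
          rw [h4]; have := hbdd x; gcongr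
      _ = 4 * A := by ring
  ------------------------------------------------------------------
  -- OUTER PART
  ------------------------------------------------------------------
  set S : ℕ → Set (Euc n) :=
    fun k => Metric.ball (0:Euc n) (R * 2^(k+1)) \ Metric.ball 0 (R * 2^k) with hSdef
  have hSm : ∀ k, MeasurableSet (S k) := fun k => measurableSet_ball.diff measurableSet_ball
  have hmemS : ∀ k y, y ∈ S k ↔ (R * 2^k ≤ ‖y‖ ∧ ‖y‖ < R * 2^(k+1)) := by
    intro k y
    simp only [hSdef, Set.mem_diff, mem_ball_zero_iff, not_lt]
    tauto
  have hSdisj : ∀ j k, j < k → Disjoint (S j) (S k) := by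
    intro j k hjk
    rw [Set.disjoint_left]
    intro y hyj hyk
    have h1 := ((hmemS j y).1 hyj).2
    have h2 := ((hmemS k y).1 hyk).1
    have h3 : R * 2^(j+1) ≤ R * 2^k := by
      have h4 : (2:ℝ)^(j+1) ≤ 2^k :=
        pow_le_pow_right₀ (by norm_num) hjk
      exact mul_le_mul_of_nonneg_left h4 hR.le
    linarith
  have hSd : Pairwise (Function.onFun Disjoint S) := by
    intro j k hjk
    rcases lt_or_gt_of_ne hjk with h | h
    · exact hSdisj j k h
    · exact (hSdisj k j h).symm
  have hSu : (⋃ k, S k) = (Metric.ball (0:Euc n) R)ᶜ := by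
    ext y
    simp only [Set.mem_iUnion, Set.mem_compl_iff, mem_ball_zero_iff, not_lt]
    constructor
    · rintro ⟨k, hy⟩
      have h1 := ((hmemS k y).1 hy).1
      have h2 : (1:ℝ) ≤ 2^k := one_le_pow₀ (by norm_num)
      nlinarith
    · intro hy
      have hex : ∃ m, ‖y‖ < R * 2^(m+1) := by
        obtain ⟨m, hm⟩ := pow_unbounded_of_one_lt (‖y‖ / R) (one_lt_two (α := ℝ))
        refine ⟨m, ?_⟩
        rw [div_lt_iff₀ hR] at hm
        have : (2:ℝ)^m ≤ 2^(m+1) := pow_le_pow_right₀ (by norm_num) (Nat.le_succ m)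
        nlinarith
      have hk1 : ‖y‖ < R * 2^(Nat.find hex + 1) := Nat.find_spec hex
      refine ⟨Nat.find hex, (hmemS _ y).2 ⟨?_, hk1⟩⟩
      by_cases hk0 : Nat.find hex = 0
      · rw [hk0]; simpa using hy
      · obtain ⟨m, hm⟩ := Nat.exists_eq_succ_of_ne_zero hk0
        have hmin := Nat.find_min hex (m := m) (by omega)
        rw [hm]
        exact not_lt.1 hmin
  have houterterm : ∀ k, ∫ y in S k, |f y| ≤ (A * W * c₂) * q₂^k := by
    intro k
    have hρ : 0 < R * 2^k := by positivity
    have hset : S k = Metric.ball (0:Euc n) (2*(R*2^k)) \ Metric.ball 0 (R*2^k) := by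
      rw [hSdef]
      congr 2
      ring
    have hIK : IntegrableOn (fun y => |K x' y - K x y|) (S k) volume := by
      rw [hset]; exact hann _ hρ
    have hb : ∀ y ∈ S k, |f y| ≤ 4*A * |K x' y - K x y| := by
      intro y hy
      rw [hfdef]
      simp only
      rw [abs_mul]
      exact mul_le_mul_of_nonneg_right (htriv y) (abs_nonneg _)
    calc ∫ y in S k, |f y| ≤ ∫ y in S k, 4*A * |K x' y - K x y| :=
          setIntegral_mono_on (hInt.abs.integrableOn) (hIK.const_mul _) (hSm k) hb
      _ = 4*A * ∫ y in S k, |K x' y - K x y| := integral_const_mul _ _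
      _ ≤ 4*A * (W * (R*2^k) ^ (-(2*s))) := by
          apply mul_le_mul_of_nonneg_left _ (by positivity)
          rw [hset]
          exact hannI _ hρ
      _ = (A * W * c₂) * q₂^k := by
          rw [Real.mul_rpow hR.le (by positivity), rpow_pow_comm (by norm_num : (0:ℝ) ≤ 2)]
          rw [hc₂def, hq₂def]
          ring
  have houter : ∫ y in (Metric.ball (0:Euc n) R)ᶜ, |f y| ≤ (A * W * c₂) * (1-q₂)⁻¹ := by
    rw [← hSu, integral_iUnion hSm hSd (by rw [hSu]; exact hInt.abs.integrableOn)]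
    have hsumg : Summable fun k => (A * W * c₂) * q₂^k :=
      (summable_geometric_of_lt_one hq₂0 hq₂1).mul_left _
    have hsumf : Summable fun k => ∫ y in S k, |f y| :=
      Summable.of_nonneg_of_le (fun k => integral_nonneg (fun y => abs_nonneg _))
        houterterm hsumg
    calc ∑' k, ∫ y in S k, |f y| ≤ ∑' k, (A * W * c₂) * q₂^k :=
          Summable.tsum_le_tsum houterterm hsumf hsumg
      _ = (A * W * c₂) * (1-q₂)⁻¹ := by
          rw [tsum_mul_left, tsum_geometric_of_lt_one hq₂0 hq₂1]
  ------------------------------------------------------------------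
  -- INNER PART
  ------------------------------------------------------------------
  set T : ℕ → Set (Euc n) :=
    fun k => Metric.ball (0:Euc n) (R * (1/2)^k) \ Metric.ball 0 (R * (1/2)^(k+1)) with hTdef
  have hTm : ∀ k, MeasurableSet (T k) := fun k => measurableSet_ball.diff measurableSet_ball
  have hmemT : ∀ k y, y ∈ T k ↔ (R * (1/2)^(k+1) ≤ ‖y‖ ∧ ‖y‖ < R * (1/2)^k) := by
    intro k y
    simp only [hTdef, Set.mem_diff, mem_ball_zero_iff, not_lt]
    tauto
  have hTdisj : ∀ j k, j < k → Disjoint (T j) (T k) := by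
    intro j k hjk
    rw [Set.disjoint_left]
    intro y hyj hyk
    have h1 := ((hmemT j y).1 hyj).1
    have h2 := ((hmemT k y).1 hyk).2
    have h3 : R * (1/2:ℝ)^k ≤ R * (1/2)^(j+1) := by
      have h4 : ((1:ℝ)/2)^k ≤ (1/2)^(j+1) :=
        pow_le_pow_of_le_one (by norm_num) (by norm_num) hjk
      exact mul_le_mul_of_nonneg_left h4 hR.le
    linarith
  have hTd : Pairwise (Function.onFun Disjoint T) := by
    intro j k hjk
    rcases lt_or_gt_of_ne hjk with h | h
    · exact hTdisj j k h
    · exact (hTdisj k j h).symm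
  have hTu : (⋃ k, T k) = Metric.ball (0:Euc n) R \ {0} := by
    ext y
    simp only [Set.mem_iUnion, Set.mem_diff, mem_ball_zero_iff, Set.mem_singleton_iff]
    constructor
    · rintro ⟨k, hy⟩
      obtain ⟨h1, h2⟩ := (hmemT k y).1 hy
      have h3 : ((1:ℝ)/2)^k ≤ 1 := pow_le_one₀ (by norm_num) (by norm_num)
      have h4 : 0 < R * (1/2:ℝ)^(k+1) := by positivity
      have h5 : R * (1/2:ℝ)^k ≤ R := by
        calc R * (1/2:ℝ)^k ≤ R * 1 := mul_le_mul_of_nonneg_left h3 hR.le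
          _ = R := mul_one R
      constructor
      · linarith
      · intro h; rw [h, norm_zero] at h1; linarith
    · rintro ⟨hy1, hy2⟩
      have hy0 : 0 < ‖y‖ := norm_pos_iff.2 hy2
      have hex : ∃ m, R * (1/2:ℝ)^(m+1) ≤ ‖y‖ := by
        obtain ⟨m, hm⟩ := exists_pow_lt_of_lt_one (div_pos hy0 hR) (by norm_num : (1:ℝ)/2 < 1)
        refine ⟨m, ?_⟩
        rw [lt_div_iff₀ hR] at hm
        have : ((1:ℝ)/2)^(m+1) ≤ (1/2)^m :=
          pow_le_pow_of_le_one (by norm_num) (by norm_num) (Nat.le_succ m)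
        nlinarith
      have hk1 : R * (1/2:ℝ)^(Nat.find hex + 1) ≤ ‖y‖ := Nat.find_spec hex
      refine ⟨Nat.find hex, (hmemT _ y).2 ⟨hk1, ?_⟩⟩
      by_cases hk0 : Nat.find hex = 0
      · rw [hk0]; simpa using hy1
      · obtain ⟨m, hm⟩ := Nat.exists_eq_succ_of_ne_zero hk0
        have hmin := Nat.find_min hex (m := m) (by omega)
        rw [hm]
        exact lt_of_not_ge hmin
  have hinnerterm : ∀ k, ∫ y in T k, |f y| ≤ (A * W * c₁) * q₁^k := by
    intro k
    have hρ : 0 < R * (1/2:ℝ)^(k+1) := by positivity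
    have hrad : 2 * (R * (1/2:ℝ)^(k+1)) = R * (1/2)^k := by rw [pow_succ]; ring
    have hset : T k = Metric.ball (0:Euc n) (2*(R*(1/2)^(k+1)))
        \ Metric.ball 0 (R*(1/2)^(k+1)) := by rw [hTdef, hrad]
    have hIK : IntegrableOn (fun y => |K x' y - K x y|) (T k) volume := by
      rw [hset]; exact hann _ hρ
    have hb : ∀ y ∈ T k, |f y| ≤ (2 * A * (R*(1/2)^k)^2) * |K x' y - K x y| := by
      intro y hy
      obtain ⟨h1, h2⟩ := (hmemT k y).1 hy
      have h3 : ((1:ℝ)/2)^k ≤ 1 := pow_le_one₀ (by norm_num) (by norm_num)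
      have hyr : ‖y‖ ≤ r / 4 := by nlinarith
      have hsd := secdiff hr hA0 hC2 hA hx hyr
      have h4 : ‖y‖^2 ≤ (R*(1/2:ℝ)^k)^2 :=
        pow_le_pow_left₀ (norm_nonneg _) h2.le 2
      rw [hfdef]
      simp only
      rw [abs_mul]
      apply mul_le_mul_of_nonneg_right _ (abs_nonneg _)
      calc |2 * u x - u (x + y) - u (x - y)| ≤ 2 * A * ‖y‖^2 := hsd
        _ ≤ 2 * A * (R*(1/2:ℝ)^k)^2 := by nlinarith
    calc ∫ y in T k, |f y| ≤ ∫ y in T k, (2 * A * (R*(1/2)^k)^2) * |K x' y - K x y| :=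
          setIntegral_mono_on (hInt.abs.integrableOn) (hIK.const_mul _) (hTm k) hb
      _ = (2 * A * (R*(1/2)^k)^2) * ∫ y in T k, |K x' y - K x y| := integral_const_mul _ _
      _ ≤ (2 * A * (R*(1/2)^k)^2) * (W * (R*(1/2)^(k+1)) ^ (-(2*s))) := by
          apply mul_le_mul_of_nonneg_left _ (by positivity)
          rw [hset]
          exact hannI _ hρ
      _ = (A * W * c₁) * q₁^k := by
          rw [Real.mul_rpow hR.le (by positivity), half_pow_rpow (k+1) s]
          have e1 : (R*(1/2:ℝ)^k)^2 = R^2 * (1/4:ℝ)^k := by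
            rw [mul_pow, ← pow_mul, mul_comm k 2, pow_mul]
            norm_num
          have e3 : q₁^k = b^k * (1/4:ℝ)^k := by
            rw [show q₁ = b * (1/4) by rw [hq₁def]; ring, mul_pow]
          rw [e1, e3, hc₁def, pow_succ, ← hbdef]
          ring
  have hinner : ∫ y in Metric.ball (0:Euc n) R, |f y| ≤ (A * W * c₁) * (1-q₁)⁻¹ := by
    have h0 : volume ({(0:Euc n)} : Set (Euc n)) = 0 := measure_singleton _
    have hae : (Metric.ball (0:Euc n) R \ {0} : Set (Euc n)) =ᵐ[volume]
        Metric.ball (0:Euc n) R := by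
      rw [diff_ae_eq_self]
      exact measure_mono_null Set.inter_subset_right h0
    rw [show (∫ y in Metric.ball (0:Euc n) R, |f y|)
        = ∫ y in Metric.ball (0:Euc n) R \ {0}, |f y| by
      rw [Measure.restrict_congr_set hae]]
    rw [← hTu, integral_iUnion hTm hTd (by
      rw [hTu]; exact (hInt.abs.integrableOn).mono_set Set.diff_subset)]
    have hsumg : Summable fun k => (A * W * c₁) * q₁^k :=
      (summable_geometric_of_lt_one hq₁0 hq₁1).mul_left _
    have hsumf : Summable fun k => ∫ y in T k, |f y| :=
      Summable.of_nonneg_of_le (fun k => integral_nonneg (fun y => abs_nonneg _))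
        hinnerterm hsumg
    calc ∑' k, ∫ y in T k, |f y| ≤ ∑' k, (A * W * c₁) * q₁^k :=
          Summable.tsum_le_tsum hinnerterm hsumf hsumg
      _ = (A * W * c₁) * (1-q₁)⁻¹ := by
          rw [tsum_mul_left, tsum_geometric_of_lt_one hq₁0 hq₁1]
  ------------------------------------------------------------------
  -- CONCLUSION
  ------------------------------------------------------------------
  calc |∫ y, f y| ≤ ∫ y, |f y| := by
        simpa [Real.norm_eq_abs] using norm_integral_le_integral_norm (f := f) (μ := volume)
    _ = (∫ y in Metric.ball (0:Euc n) R, |f y|)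
        + ∫ y in (Metric.ball (0:Euc n) R)ᶜ, |f y| :=
        (integral_add_compl measurableSet_ball hInt.abs).symm
    _ ≤ (A * W * c₁) * (1-q₁)⁻¹ + (A * W * c₂) * (1-q₂)⁻¹ := add_le_add hinner houter
    _ = (c₁ * (1-q₁)⁻¹ + c₂ * (1-q₂)⁻¹) * A * W := by ring
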